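/- Let σ : ℝ × [0,τ] → ℝ be C³ in (x,t) with all derivatives up to order 3 bounded by a constant C₀, 2π-periodic in x, and satisfying σ(0,0) = 0, ∂_x σ(0,0) = 0, ∂_x² σ(0,0) = −c₂ < 0, ∂_t σ(0,0) = c₁ > 0. Define ħ(x,t) = (1/4)(A^{-1}τ² + A^{-1} sin(x/2)) + A^{-2}τ t + A t sin(x/2). Then there exist A₀ and, for each A ≥ A₀, a τ₀(A) > 0 such that for all 0 < τ ≤ τ₀(A): σ(x,t) + ∂_t ħ(x,t) − A^{1/2} ħ(x,t) ≥ (1/2) A^{-2} τ for all x ∈ [0,π] and t ∈ [0, τ²]. -/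

import Mathlib

set_option maxHeartbeats 1000000

/-- The key inequality `(ħ)`: for a Rayleigh–Taylor function `σ` vanishing to second
order in `x` and first order in `t` at `(0,0)` (with `∂_x²σ(0,0) < 0 < ∂_tσ(0,0)`),
with the weight `ħ(x,t) = ¼(A⁻¹τ² + A⁻¹ sin(x/2)) + A⁻²τt + At sin(x/2)`, one has
`σ + ∂_t ħ − A^{1/2} ħ ≥ ½ A⁻² τ` on `[0,π] × [0,τ²]` for suitable `A`, `τ`. -/
theorem stmt_13 (σ : ℝ → ℝ → ℝ) (C0 c1 c2 : ℝ)
    (hC0 : 0 < C0) (hc1 : 0 < c1) (hc2 : 0 < c2)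
    (hσ : ContDiff ℝ 3 (fun p : ℝ × ℝ => σ p.1 p.2))
    (hbound : ∀ (i : ℕ), i ≤ 3 → ∀ p : ℝ × ℝ,
      ‖iteratedFDeriv ℝ i (fun q : ℝ × ℝ => σ q.1 q.2) p‖ ≤ C0)
    (hper : ∀ x t, σ (x + 2 * Real.pi) t = σ x t)
    (h00 : σ 0 0 = 0)
    (hx0 : deriv (fun x => σ x 0) 0 = 0)
    (hxx0 : deriv (deriv (fun x => σ x 0)) 0 = -c2)
    (ht0 : deriv (fun t => σ 0 t) 0 = c1) :
    ∃ A0 : ℝ, ∀ A : ℝ, A0 ≤ A → ∃ τ0 > 0, ∀ τ : ℝ, 0 < τ → τ ≤ τ0 →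
      ∀ x ∈ Set.Icc (0 : ℝ) Real.pi, ∀ t ∈ Set.Icc (0 : ℝ) (τ ^ 2),
        (1 / 2) * (A ^ 2)⁻¹ * τ ≤
          σ x t + ((A ^ 2)⁻¹ * τ + A * Real.sin (x / 2))
            - Real.sqrt A *
              ((1 / 4) * (A⁻¹ * τ ^ 2 + A⁻¹ * Real.sin (x / 2)) + (A ^ 2)⁻¹ * τ * t
                + A * t * Real.sin (x / 2)) := by
  -- Step 1: a Lipschitz lower bound on σ from the first-derivative bound.
  have hlip : ∀ x t : ℝ, 0 ≤ x → 0 ≤ t → -(C0 * (x + t)) ≤ σ x t := by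
    intro x t hx ht
    set F : ℝ × ℝ → ℝ := fun p => σ p.1 p.2 with hF
    have hdiff : ∀ p : ℝ × ℝ, DifferentiableAt ℝ F p :=
      fun p => (hσ.differentiable (by norm_num)).differentiableAt
    have hfd : ∀ p : ℝ × ℝ, ‖fderiv ℝ F p‖ ≤ C0 := by
      intro p
      refine ContinuousLinearMap.opNorm_le_bound _ hC0.le (fun v => ?_)
      have h1 : fderiv ℝ F p v = iteratedFDeriv ℝ 1 F p (fun _ => v) := by
        rw [iteratedFDeriv_one_apply]
      rw [h1]
      calc ‖iteratedFDeriv ℝ 1 F p (fun _ => v)‖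
          ≤ ‖iteratedFDeriv ℝ 1 F p‖ * ∏ i : Fin 1, ‖(fun _ => v) i‖ :=
            (iteratedFDeriv ℝ 1 F p).le_opNorm _
        _ ≤ C0 * ‖v‖ := by
            simp only [Finset.prod_const, Finset.card_univ, Fintype.card_fin, pow_one]
            exact mul_le_mul_of_nonneg_right (hbound 1 (by norm_num) p) (norm_nonneg v)
    have key := convex_univ.norm_image_sub_le_of_norm_fderiv_le
      (fun p _ => hdiff p) (fun p _ => hfd p) (Set.mem_univ ((0,0) : ℝ × ℝ))
      (Set.mem_univ ((x,t) : ℝ × ℝ))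
    have hFx : F (x, t) = σ x t := rfl
    have hF0 : F (0, 0) = 0 := h00
    have hnorm : ‖((x,t) : ℝ × ℝ) - (0,0)‖ ≤ x + t := by
      rw [Prod.norm_def]
      simp only [Prod.fst_sub, Prod.snd_sub, sub_zero]
      rw [Real.norm_eq_abs, Real.norm_eq_abs, abs_of_nonneg hx, abs_of_nonneg ht]
      exact max_le (by linarith) (by linarith)
    rw [hFx, hF0, sub_zero] at key
    have habs : |σ x t| ≤ C0 * (x + t) := by
      calc |σ x t| = ‖σ x t‖ := rfl
        _ ≤ C0 * ‖((x,t) : ℝ × ℝ) - (0,0)‖ := key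
        _ ≤ C0 * (x + t) := mul_le_mul_of_nonneg_left hnorm hC0.le
    linarith [(abs_le.mp habs).1]
  -- Step 2: choose A0 and τ0 and do the arithmetic.
  refine ⟨max 1 (2 * C0 * Real.pi + 2), fun A hA => ?_⟩
  have hA1 : (1 : ℝ) ≤ A := le_trans (le_max_left _ _) hA
  have hA2 : 2 * C0 * Real.pi + 2 ≤ A := le_trans (le_max_right _ _) hA
  have hA0 : (0 : ℝ) < A := by linarith
  refine ⟨min (1 / (2 * A)) ((A ^ 2)⁻¹ / (4 * (C0 + 1))), by positivity, ?_⟩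
  intro τ hτ hττ0 x hx t ht
  obtain ⟨hx0', hxπ⟩ := hx
  obtain ⟨ht0', htτ⟩ := ht
  have hτ1 : τ ≤ 1 / (2 * A) := le_trans hττ0 (min_le_left _ _)
  have hτ2 : τ ≤ (A ^ 2)⁻¹ / (4 * (C0 + 1)) := le_trans hττ0 (min_le_right _ _)
  set r := Real.sqrt A with hr
  have hr1 : 1 ≤ r := by
    rw [hr, show (1:ℝ) = Real.sqrt 1 by simp]
    exact Real.sqrt_le_sqrt hA1
  have hrA : r ≤ A := by
    have h1 : A ≤ A ^ 2 := by nlinarith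
    calc r ≤ Real.sqrt (A ^ 2) := Real.sqrt_le_sqrt h1
      _ = A := Real.sqrt_sq hA0.le
  set s := Real.sin (x / 2) with hs
  have hπ := Real.pi_pos
  have hs0 : 0 ≤ s := Real.sin_nonneg_of_nonneg_of_le_pi (by linarith) (by linarith)
  have hs1 : s ≤ 1 := Real.sin_le_one _
  have hxs : x ≤ Real.pi * s := by
    have := Real.mul_le_sin (x := x / 2) (by linarith) (by linarith)
    rw [← hs] at this
    have hπ0 : (0:ℝ) < Real.pi := hπ
    rw [div_mul_eq_mul_div, div_le_iff₀ hπ0] at this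
    nlinarith
  have hτsq : τ ^ 2 ≤ (A ^ 2)⁻¹ / 4 := by
    have h2A : (0:ℝ) < 2 * A := by linarith
    have : τ ^ 2 ≤ (1 / (2 * A)) ^ 2 := by
      apply pow_le_pow_left₀ hτ.le hτ1
    calc τ ^ 2 ≤ (1 / (2 * A)) ^ 2 := this
      _ = (A ^ 2)⁻¹ / 4 := by field_simp; ring
  have hinv2 : (0:ℝ) < (A ^ 2)⁻¹ := by positivity
  have hinvA : (0:ℝ) < A⁻¹ := by positivity
  -- r * t ≤ 1/4 (in fact ≤ 1/(4A))
  have hrt : r * t ≤ 1 / 4 := by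
    have h1 : r * t ≤ A * τ ^ 2 :=
      mul_le_mul hrA htτ ht0' hA0.le
    have h2 : A * τ ^ 2 ≤ A * ((A ^ 2)⁻¹ / 4) := mul_le_mul_of_nonneg_left hτsq hA0.le
    have h3 : A * ((A ^ 2)⁻¹ / 4) = 1 / (4 * A) := by field_simp
    have h4 : 1 / (4 * A) ≤ 1 / 4 := by
      apply div_le_div_of_nonneg_left (by norm_num) (by norm_num) (by linarith)
    linarith
  -- r * A * t ≤ 1/4
  have hrAt : r * A * t ≤ 1 / 4 := by
    have h1 : r * A * t ≤ A * A * τ ^ 2 := by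
      have : r * A ≤ A * A := mul_le_mul_of_nonneg_right hrA hA0.le
      exact mul_le_mul this htτ ht0' (by positivity)
    have h2 : A * A * τ ^ 2 ≤ A * A * ((A ^ 2)⁻¹ / 4) :=
      mul_le_mul_of_nonneg_left hτsq (by positivity)
    have h3 : A * A * ((A ^ 2)⁻¹ / 4) = 1 / 4 := by field_simp
    linarith
  have hrinvA : r * A⁻¹ ≤ 1 := by
    rw [← div_eq_mul_inv, div_le_one hA0]; exact hrA
  -- coefficient of s is large
  have hcoeff : C0 * Real.pi ≤ A - (1/4) * r * A⁻¹ - r * A * t := by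
    have h1 : (1/4) * (r * A⁻¹) ≤ 1/4 * 1 := by linarith
    have h2 : 0 ≤ C0 * Real.pi := mul_nonneg hC0.le hπ.le
    nlinarith
  have h1 : C0 * Real.pi * s ≤ s * (A - (1/4) * r * A⁻¹ - r * A * t) := by
    rw [mul_comm (C0 * Real.pi) s]
    exact mul_le_mul_of_nonneg_left hcoeff hs0
  have h2 : C0 * x ≤ C0 * Real.pi * s := by
    have := mul_le_mul_of_nonneg_left hxs hC0.le
    linarith [this]
  have h3 : (3/4) * ((A ^ 2)⁻¹ * τ) ≤ (A ^ 2)⁻¹ * τ * (1 - r * t) := by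
    have hpos : 0 ≤ (A ^ 2)⁻¹ * τ := by positivity
    have := mul_le_mul_of_nonneg_left (by linarith : (3/4 : ℝ) ≤ 1 - r * t) hpos
    linarith [this]
  have h4 : C0 * t + (1/4) * r * A⁻¹ * τ ^ 2 ≤ (1/4) * ((A ^ 2)⁻¹ * τ) := by
    have ha : C0 * t ≤ C0 * τ ^ 2 := mul_le_mul_of_nonneg_left htτ hC0.le
    have hb : (1/4) * r * A⁻¹ * τ ^ 2 ≤ (1/4) * τ ^ 2 := by
      have h := mul_le_mul_of_nonneg_right hrinvA (sq_nonneg τ)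
      have h2 : (1/4) * r * A⁻¹ * τ ^ 2 = (1/4) * (r * A⁻¹ * τ ^ 2) := by ring
      rw [h2]; linarith
    have hc : (C0 + 1/4) * τ ^ 2 ≤ (C0 + 1) * (τ * τ) := by
      have h : τ ^ 2 = τ * τ := sq τ
      rw [h]; nlinarith [mul_pos hτ hτ]
    have hd : (C0 + 1) * (τ * τ) ≤ (C0 + 1) * (τ * ((A ^ 2)⁻¹ / (4 * (C0 + 1)))) := by
      apply mul_le_mul_of_nonneg_left _ (by linarith)
      exact mul_le_mul_of_nonneg_left hτ2 hτ.le
    have he : (C0 + 1) * (τ * ((A ^ 2)⁻¹ / (4 * (C0 + 1)))) = (1/4) * ((A ^ 2)⁻¹ * τ) := by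
      field_simp
    nlinarith
  have hσlb : -(C0 * (x + t)) ≤ σ x t := hlip x t hx0' ht0'
  have hkey : σ x t + ((A ^ 2)⁻¹ * τ + A * s)
      - r * ((1 / 4) * (A⁻¹ * τ ^ 2 + A⁻¹ * s) + (A ^ 2)⁻¹ * τ * t + A * t * s)
      = σ x t + s * (A - (1/4) * r * A⁻¹ - r * A * t)
        + (A ^ 2)⁻¹ * τ * (1 - r * t) - (1/4) * r * A⁻¹ * τ ^ 2 := by ring
  rw [hkey]
  linarith
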